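/- Let Y be a finite set with at least two elements, L : Y × Y → ℝ, and ρ > 0. Define L_ρ(x, y, h) = Φ*( max_{y' ≠ y} { L(y', y) - (1/ρ)·(h(x,y) - h(x,y')) } ) where Φ*(r) = min(M, max(0, r)) and M = max_{y,y'} L(y,y'). Then for any two scoring functions h, h̃ : X × Y → ℝ and any (x, y), |L_ρ(x, y, h) - L_ρ(x, y, h̃)| ≤ (2/ρ) · max_{y' ∈ Y} |h(x, y') - h̃(x, y')|, i.e., L_ρ is (2/ρ, ℓ∞)-Lipschitz in h. -/

import Mathlib

open scoped BigOperators

/-- The margin loss `L_ρ(x, y, h) = Φ*(max_{y' ≠ y}(L(y',y) - (h(x,y) - h(x,y'))/ρ))`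
with `Φ*(r) = min(M, max(0, r))`. -/
noncomputable def marginLoss {X Y : Type*} [Fintype Y]
    (L : Y → Y → ℝ) (M ρ : ℝ) (x : X) (y : Y) (h : X × Y → ℝ) : ℝ :=
  min M (max 0 (⨆ y' : {y' : Y // y' ≠ y},
    L y'.1 y - (h (x, y) - h (x, y'.1)) / ρ))

theorem marginLoss_ellinf_lipschitz {X Y : Type*} [Fintype Y]
    (hY : 2 ≤ Fintype.card Y)
    (L : Y → Y → ℝ) (ρ : ℝ) (hρ : 0 < ρ)
    (M : ℝ) (hM : M = ⨆ p : Y × Y, L p.1 p.2)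
    (h h' : X × Y → ℝ) (x : X) (y : Y) :
    |marginLoss L M ρ x y h - marginLoss L M ρ x y h'| ≤
      (2 / ρ) * ⨆ y' : Y, |h (x, y') - h' (x, y')| := by
  have hne : Nonempty {y' : Y // y' ≠ y} := by
    obtain ⟨z, hz⟩ := Fintype.exists_ne_of_one_lt_card (by omega) y
    exact ⟨⟨z, hz⟩⟩
  set C : ℝ := ⨆ y' : Y, |h (x, y') - h' (x, y')| with hC
  have hYne : Nonempty Y := ⟨y⟩
  have hCb : BddAbove (Set.range fun y' : Y => |h (x, y') - h' (x, y')|) :=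
    Finite.bddAbove_range _
  have hCle : ∀ y' : Y, |h (x, y') - h' (x, y')| ≤ C := fun y' => le_ciSup hCb y'
  set f : {y' : Y // y' ≠ y} → ℝ := fun y' => L y'.1 y - (h (x, y) - h (x, y'.1)) / ρ
  set g : {y' : Y // y' ≠ y} → ℝ := fun y' => L y'.1 y - (h' (x, y) - h' (x, y'.1)) / ρ
  have hfb : BddAbove (Set.range f) := Finite.bddAbove_range _
  have hgb : BddAbove (Set.range g) := Finite.bddAbove_range _
  have hdiff : ∀ y' : {y' : Y // y' ≠ y}, |f y' - g y'| ≤ 2 / ρ * C := by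
    intro y'
    have h1 := hCle y
    have h2 := hCle y'.1
    have : f y' - g y' = ((h' (x, y) - h (x, y)) - (h' (x, y'.1) - h (x, y'.1))) / ρ := by
      simp only [f, g]; ring
    rw [this, abs_div, abs_of_pos hρ, div_mul_eq_mul_div 2 ρ C, mul_comm 2 C,
      div_le_div_iff_of_pos_right hρ]
    calc |((h' (x, y) - h (x, y)) - (h' (x, y'.1) - h (x, y'.1)))|
        ≤ |h' (x, y) - h (x, y)| + |h' (x, y'.1) - h (x, y'.1)| := abs_sub _ _
      _ ≤ C + C := by
          rw [abs_sub_comm, abs_sub_comm (h' (x, y'.1))]; exact add_le_add h1 h2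
      _ = C * 2 := by ring
  have hsup : |(⨆ y', f y') - (⨆ y', g y')| ≤ 2 / ρ * C := by
    rw [abs_le]
    constructor
    · have : (⨆ y', g y') ≤ (⨆ y', f y') + 2 / ρ * C := by
        refine ciSup_le fun y' => ?_
        obtain ⟨l, r⟩ := abs_le.mp (hdiff y')
        calc g y' ≤ f y' + 2 / ρ * C := by linarith
          _ ≤ (⨆ z, f z) + 2 / ρ * C := by have := le_ciSup hfb y'; linarith
      linarith
    · have : (⨆ y', f y') ≤ (⨆ y', g y') + 2 / ρ * C := by
        refine ciSup_le fun y' => ?_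
        obtain ⟨l, r⟩ := abs_le.mp (hdiff y')
        calc f y' ≤ g y' + 2 / ρ * C := by linarith
          _ ≤ (⨆ z, g z) + 2 / ρ * C := by have := le_ciSup hgb y'; linarith
      linarith
  calc |marginLoss L M ρ x y h - marginLoss L M ρ x y h'|
      ≤ max |M - M| |max 0 (⨆ y', f y') - max 0 (⨆ y', g y')| :=
        abs_min_sub_min_le_max _ _ _ _
    _ ≤ |(⨆ y', f y') - (⨆ y', g y')| := by
        refine max_le ?_ ?_
        · simp only [sub_self, abs_zero]; exact abs_nonneg _
        · simpa [max_comm] using abs_max_sub_max_le_abs (⨆ y', f y') (⨆ y', g y') 0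
    _ ≤ 2 / ρ * C := hsup
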